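/- Let X be a normed space, C ⊆ X nonempty convex, T : C → C nonexpansive, and (λ_n)_{n≥1} a decreasing sequence in [0,1] with lim λ_n = 0 (rate of convergence α) and ∑ λ_n divergent (rate of divergence θ). Let x ∈ C with Halpern iteration (x_n) bounded and M ∈ ℕ* with M ≥ ‖x_n‖ + ‖x‖ + ‖Tx‖ for all n ≥ 1. Then for all ε ∈ (0,2) and all n ≥ max{ θ(α(ε/(8M)) + 1 + ⌈ln(8M/ε)⌉), α(ε/(4M)) }, we have ‖x_n - T x_n‖ < ε. -/

import Mathlib

set_option maxHeartbeats 1600000 in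
theorem halpern_rate_decreasing_lambda
    {X : Type*} [NormedAddCommGroup X] [NormedSpace ℝ X]
    (C : Set X) (hC : C.Nonempty) (hconv : Convex ℝ C)
    (T : X → X) (hTmaps : Set.MapsTo T C C)
    (hT : ∀ u ∈ C, ∀ v ∈ C, ‖T u - T v‖ ≤ ‖u - v‖)
    (lam : ℕ → ℝ) (hlam : ∀ n ≥ 1, lam n ∈ Set.Icc (0:ℝ) 1)
    (hdec : ∀ n ≥ 1, lam (n + 1) ≤ lam n)
    (hlim : Filter.Tendsto lam Filter.atTop (nhds 0))
    (α : ℝ → ℕ) (hαpos : ∀ ε > (0:ℝ), 1 ≤ α ε)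
    (hα : ∀ ε > (0:ℝ), ∀ n : ℕ, α ε ≤ n → lam n < ε)
    (θ : ℕ → ℕ) (hθpos : ∀ n : ℕ, 1 ≤ n → 1 ≤ θ n)
    (hθ : ∀ n : ℕ, 1 ≤ n → (n : ℝ) ≤ ∑ i ∈ Finset.Icc 1 (θ n), lam i)
    (x₀ : X) (hx₀ : x₀ ∈ C) (x : ℕ → X) (hx0 : x 0 = x₀)
    (hrec : ∀ n : ℕ, x (n + 1) = lam (n + 1) • x₀ + (1 - lam (n + 1)) • T (x n))
    (hbound : ∃ K : ℝ, ∀ n : ℕ, ‖x n‖ ≤ K)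
    (M : ℕ) (hMpos : 1 ≤ M)
    (hM : ∀ n ≥ 1, ‖x n‖ + ‖x₀‖ + ‖T x₀‖ ≤ (M : ℝ)) :
    ∀ ε : ℝ, 0 < ε → ε < 2 →
      ∀ n : ℕ,
        max (θ (α (ε / (8 * M)) + 1 + ⌈Real.log (8 * M / ε)⌉₊)) (α (ε / (4 * M))) ≤ n →
        ‖x n - T (x n)‖ < ε := by
  intro ε hε hε2 n hn
  have hM1 : (1:ℝ) ≤ (M:ℝ) := by exact_mod_cast hMpos
  have hMR : (0:ℝ) < (M:ℝ) := by linarith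
  have hε8M : (0:ℝ) < ε / (8 * M) := by positivity
  have hε4M : (0:ℝ) < ε / (4 * M) := by positivity
  -- all iterates stay in C
  have hxC : ∀ k, x k ∈ C := by
    intro k
    induction k with
    | zero => rw [hx0]; exact hx₀
    | succ k ih =>
      rw [hrec k]
      have hl := hlam (k+1) (by omega)
      exact hconv hx₀ (hTmaps ih) hl.1 (by linarith [hl.2]) (by ring)
  -- elementary norm bounds
  have hx0M : ‖x₀‖ ≤ (M:ℝ) := by
    have h1 := hM 1 le_rfl
    have := norm_nonneg (x 1); have := norm_nonneg (T x₀); linarith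
  have hTx0M : ‖T x₀‖ ≤ (M:ℝ) := by
    have h1 := hM 1 le_rfl
    have := norm_nonneg (x 1); have := norm_nonneg x₀; linarith
  have hxM : ∀ k, 1 ≤ k → ‖x k‖ ≤ (M:ℝ) := by
    intro k hk
    have h1 := hM k hk
    have := norm_nonneg x₀; have := norm_nonneg (T x₀); linarith
  have hTxM : ∀ k, ‖T (x k)‖ ≤ (M:ℝ) := by
    intro k
    rcases Nat.eq_zero_or_pos k with h | h
    · subst h; rw [hx0]; exact hTx0M
    · have h1 : ‖T (x k) - T x₀‖ ≤ ‖x k - x₀‖ := hT _ (hxC k) _ hx₀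
      have h2 : ‖x k - x₀‖ ≤ ‖x k‖ + ‖x₀‖ := norm_sub_le _ _
      have h3 : ‖T (x k)‖ ≤ ‖T (x k) - T x₀‖ + ‖T x₀‖ := by
        calc ‖T (x k)‖ = ‖(T (x k) - T x₀) + T x₀‖ := by rw [sub_add_cancel]
          _ ≤ _ := norm_add_le _ _
      have := hM k h
      linarith
  have h2M : ∀ k, ‖x₀ - T (x k)‖ ≤ 2 * (M:ℝ) := by
    intro k
    have h1 := norm_sub_le x₀ (T (x k))
    have h2 := hTxM k
    linarith
  -- lam is antitone on [1, ∞)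
  have hanti : ∀ a b : ℕ, 1 ≤ a → a ≤ b → lam b ≤ lam a := by
    intro a b ha hab
    induction b with
    | zero => omega
    | succ b ih =>
      rcases Nat.lt_or_ge a (b+1) with h | h
      · exact le_trans (hdec b (by omega)) (ih (by omega))
      · have : a = b + 1 := by omega
        rw [this]
  -- one-step recurrence for consecutive differences
  have hArec : ∀ j : ℕ, ‖x (j+2) - x (j+1)‖ ≤
      (1 - lam (j+2)) * ‖x (j+1) - x j‖ + 2 * (M:ℝ) * (lam (j+1) - lam (j+2)) := by
    intro j
    have hid : x (j+2) - x (j+1) =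
        (1 - lam (j+2)) • (T (x (j+1)) - T (x j))
          + (lam (j+1) - lam (j+2)) • (T (x j) - x₀) := by
      have e1 := hrec (j+1)
      have e2 := hrec j
      have e1' : x (j+2) = lam (j+2) • x₀ + (1 - lam (j+2)) • T (x (j+1)) := by
        convert e1 using 3 <;> omega
      rw [e1', e2]
      module
    rw [hid]
    have hT1 : ‖T (x (j+1)) - T (x j)‖ ≤ ‖x (j+1) - x j‖ := hT _ (hxC _) _ (hxC _)
    have hl2 := (hlam (j+2) (by omega)).2
    have hl0 := (hlam (j+2) (by omega)).1
    have hd : lam (j+2) ≤ lam (j+1) := hanti (j+1) (j+2) (by omega) (by omega)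
    have h2m : ‖T (x j) - x₀‖ ≤ 2 * (M:ℝ) := by
      rw [norm_sub_rev]; exact h2M j
    calc ‖(1 - lam (j+2)) • (T (x (j+1)) - T (x j))
          + (lam (j+1) - lam (j+2)) • (T (x j) - x₀)‖
        ≤ ‖(1 - lam (j+2)) • (T (x (j+1)) - T (x j))‖
          + ‖(lam (j+1) - lam (j+2)) • (T (x j) - x₀)‖ := norm_add_le _ _
      _ = (1 - lam (j+2)) * ‖T (x (j+1)) - T (x j)‖
          + (lam (j+1) - lam (j+2)) * ‖T (x j) - x₀‖ := by
          rw [norm_smul, norm_smul, Real.norm_of_nonneg (by linarith),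
            Real.norm_of_nonneg (by linarith)]
      _ ≤ _ := by nlinarith [norm_nonneg (x (j+1) - x j)]
  set m := α (ε / (8 * M)) with hmdef
  have hm1 : 1 ≤ m := hαpos _ hε8M
  -- iterated estimate
  have key : ∀ k : ℕ, ‖x (m + k + 1) - x (m + k)‖ ≤
      (∏ i ∈ Finset.range k, (1 - lam (m + i + 2))) * ‖x (m + 1) - x m‖
        + 2 * (M:ℝ) * (lam (m + 1) - lam (m + k + 1)) := by
    intro k
    induction k with
    | zero => simp
    | succ k ih =>
      have hrecA := hArec (m + k)
      have e1 : m + (k+1) + 1 = m + k + 2 := by omega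
      have e2 : m + (k+1) = m + k + 1 := by omega
      rw [e1, e2, Finset.prod_range_succ]
      have hP0 : 0 ≤ ∏ i ∈ Finset.range k, (1 - lam (m + i + 2)) := by
        apply Finset.prod_nonneg
        intro i _
        have := (hlam (m + i + 2) (by omega)).2
        linarith
      have hl2 := (hlam (m + k + 2) (by omega)).2
      have hl0 := (hlam (m + k + 2) (by omega)).1
      have hd1 : lam (m + k + 1) ≤ lam (m + 1) := hanti (m+1) (m+k+1) (by omega) (by omega)
      have hA0 : (0:ℝ) ≤ ‖x (m + 1) - x m‖ := norm_nonneg _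
      have hd1' : (0:ℝ) ≤ lam (m + 1) - lam (m + k + 1) := by linarith
      have step2 := mul_le_mul_of_nonneg_left ih
        (by linarith : (0:ℝ) ≤ 1 - lam (m + k + 2))
      nlinarith [step2, mul_nonneg hl0 (mul_nonneg
        (by linarith : (0:ℝ) ≤ 2 * (M:ℝ)) hd1')]
  -- set up the divergence counter
  set N := m + 1 + ⌈Real.log (8 * M / ε)⌉₊ with hNdef
  have hlogpos : 0 < Real.log (8 * M / ε) := by
    apply Real.log_pos
    rw [lt_div_iff₀ hε]
    nlinarith
  have hceil1 : 1 ≤ ⌈Real.log (8 * M / ε)⌉₊ := by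
    exact Nat.one_le_iff_ne_zero.mpr (by positivity)
  have hθN : θ N ≤ n := le_trans (le_max_left _ _) hn
  have hαn : α (ε / (4 * M)) ≤ n := le_trans (le_max_right _ _) hn
  -- θ N ≥ N
  have hsum_card : ∀ t : ℕ, (∑ i ∈ Finset.Icc 1 t, lam i) ≤ (t : ℝ) := by
    intro t
    calc (∑ i ∈ Finset.Icc 1 t, lam i) ≤ ∑ i ∈ Finset.Icc 1 t, (1:ℝ) := by
          apply Finset.sum_le_sum
          intro i hi
          exact (hlam i (Finset.mem_Icc.mp hi).1).2
      _ = ((Finset.Icc 1 t).card : ℝ) := by simp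
      _ = (t : ℝ) := by rw [Nat.card_Icc]; simp
  have hN1 : 1 ≤ N := by omega
  have hθNN : N ≤ θ N := by
    have h1 := hθ N hN1
    have h2 := hsum_card (θ N)
    exact_mod_cast le_trans h1 h2
  have hmn : m + 2 ≤ n := by omega
  set k := n - m with hkdef
  have hmk : m + k = n := by omega
  -- lower bound on the sum of lam over the window
  have hS : Real.log (8 * M / ε) ≤ ∑ i ∈ Finset.range k, lam (m + i + 2) := by
    have hsplit : (∑ i ∈ Finset.Ico 1 (m+2), lam i) + ∑ i ∈ Finset.Ico (m+2) (θ N + 1), lam i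
        = ∑ i ∈ Finset.Ico 1 (θ N + 1), lam i :=
      Finset.sum_Ico_consecutive _ (by omega) (by omega)
    have hIcc : ∑ i ∈ Finset.Ico 1 (θ N + 1), lam i = ∑ i ∈ Finset.Icc 1 (θ N), lam i := by
      rw [Finset.Ico_add_one_right_eq_Icc]
    have hlow : (N:ℝ) ≤ ∑ i ∈ Finset.Ico 1 (θ N + 1), lam i := by
      rw [hIcc]; exact hθ N hN1
    have hup : (∑ i ∈ Finset.Ico 1 (m+2), lam i) ≤ (m:ℝ) + 1 := by
      have hcard : (Finset.Ico 1 (m+2)).card = m + 1 := by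
        rw [Nat.card_Ico]; omega
      calc (∑ i ∈ Finset.Ico 1 (m+2), lam i)
          ≤ ∑ i ∈ Finset.Ico 1 (m+2), (1:ℝ) := by
            apply Finset.sum_le_sum
            intro i hi
            exact (hlam i (Finset.mem_Ico.mp hi).1).2
        _ = ((Finset.Ico 1 (m+2)).card : ℝ) := by simp
        _ = (m:ℝ) + 1 := by rw [hcard]; push_cast; ring
    have htail : (N:ℝ) - ((m:ℝ) + 1) ≤ ∑ i ∈ Finset.Ico (m+2) (θ N + 1), lam i := by
      linarith
    have hsubset : ∑ i ∈ Finset.Ico (m+2) (θ N + 1), lam i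
        ≤ ∑ i ∈ Finset.Ico (m+2) (n + 2), lam i := by
      apply Finset.sum_le_sum_of_subset_of_nonneg
      · exact Finset.Ico_subset_Ico_right (by omega)
      · intro i hi _
        have hi' := Finset.mem_Ico.mp hi
        exact (hlam i (by omega : 1 ≤ i)).1
    have hconv2 : ∑ i ∈ Finset.Ico (m+2) (n + 2), lam i
        = ∑ i ∈ Finset.range k, lam (m + i + 2) := by
      rw [Finset.sum_Ico_eq_sum_range]
      have e : n + 2 - (m + 2) = k := by omega
      rw [e]
      apply Finset.sum_congr rfl
      intro i _
      congr 1
      omega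
    have hNcast : ((m:ℝ) + 1) + (⌈Real.log (8 * M / ε)⌉₊ : ℝ) = (N:ℝ) := by
      rw [hNdef]; push_cast; ring
    have hceil : Real.log (8 * M / ε) ≤ (⌈Real.log (8 * M / ε)⌉₊ : ℝ) := Nat.le_ceil _
    rw [← hconv2]
    linarith
  -- product bound
  have hP0 : 0 ≤ ∏ i ∈ Finset.range k, (1 - lam (m + i + 2)) := by
    apply Finset.prod_nonneg
    intro i _
    have := (hlam (m + i + 2) (by omega)).2
    linarith
  have hPexp : (∏ i ∈ Finset.range k, (1 - lam (m + i + 2)))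
      ≤ Real.exp (-∑ i ∈ Finset.range k, lam (m + i + 2)) := by
    rw [← Finset.sum_neg_distrib, Real.exp_sum]
    apply Finset.prod_le_prod
    · intro i _
      have := (hlam (m + i + 2) (by omega)).2
      linarith
    · intro i _
      have := Real.add_one_le_exp (-lam (m + i + 2))
      linarith
  have hPle : (∏ i ∈ Finset.range k, (1 - lam (m + i + 2))) ≤ ε / (8 * M) := by
    have h1 : Real.exp (-∑ i ∈ Finset.range k, lam (m + i + 2))
        ≤ Real.exp (-Real.log (8 * M / ε)) := by
      apply Real.exp_le_exp.mpr
      linarith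
    have h2 : Real.exp (-Real.log (8 * M / ε)) = ε / (8 * M) := by
      rw [Real.exp_neg, Real.exp_log (by positivity), inv_div]
    linarith
  -- conclude the estimate on consecutive differences
  have hA2M : ‖x (m + 1) - x m‖ ≤ 2 * (M:ℝ) := by
    have h1 := hxM (m+1) (by omega)
    have h2 := hxM m hm1
    have := norm_sub_le (x (m+1)) (x m)
    linarith
  have hlamm1 : lam (m + 1) < ε / (8 * M) := hα _ hε8M (m+1) (by omega)
  have hlamm0 : 0 ≤ lam (m + 1) := (hlam (m+1) (by omega)).1
  have hlamn0 : 0 ≤ lam (n + 1) := (hlam (n+1) (by omega)).1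
  have hlamle : lam (n + 1) ≤ lam (m + 1) := hanti (m+1) (n+1) (by omega) (by omega)
  have hdiff : ‖x (n + 1) - x n‖ < ε / 2 := by
    have hk := key k
    rw [hmk] at hk
    have hprod : (∏ i ∈ Finset.range k, (1 - lam (m + i + 2))) * ‖x (m + 1) - x m‖
        ≤ (ε / (8 * M)) * (2 * (M:ℝ)) := by
      apply mul_le_mul hPle hA2M (norm_nonneg _) (le_of_lt hε8M)
    have he : (ε / (8 * M)) * (2 * (M:ℝ)) = ε / 4 := by
      field_simp; ring
    have h2 : 2 * (M:ℝ) * (lam (m + 1) - lam (n + 1)) < ε / 4 := by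
      have : lam (m+1) - lam (n+1) < ε / (8 * M) := by linarith
      have h3 : 2 * (M:ℝ) * (lam (m + 1) - lam (n + 1)) < 2 * (M:ℝ) * (ε / (8*M)) := by
        apply mul_lt_mul_of_pos_left this (by linarith)
      have h4 : 2 * (M:ℝ) * (ε / (8*M)) = ε / 4 := by field_simp; ring
      linarith
    linarith
  -- final assembly
  have hlamn1 : lam (n + 1) < ε / (4 * M) := hα _ hε4M (n+1) (by omega)
  have hlamn1' : 0 ≤ lam (n + 1) := (hlam (n+1) (by omega)).1
  have hsecond : ‖x (n + 1) - T (x n)‖ < ε / 2 := by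
    have hid : x (n + 1) - T (x n) = lam (n + 1) • (x₀ - T (x n)) := by
      rw [hrec n]; module
    rw [hid, norm_smul, Real.norm_of_nonneg hlamn1']
    have h1 := h2M n
    calc lam (n+1) * ‖x₀ - T (x n)‖ ≤ lam (n+1) * (2 * (M:ℝ)) := by
          apply mul_le_mul_of_nonneg_left h1 hlamn1'
      _ < (ε / (4 * M)) * (2 * (M:ℝ)) := by
          apply mul_lt_mul_of_pos_right hlamn1 (by linarith)
      _ = ε / 2 := by field_simp; ring
  calc ‖x n - T (x n)‖ = ‖(x n - x (n+1)) + (x (n+1) - T (x n))‖ := by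
        rw [sub_add_sub_cancel]
    _ ≤ ‖x n - x (n+1)‖ + ‖x (n+1) - T (x n)‖ := norm_add_le _ _
    _ = ‖x (n+1) - x n‖ + ‖x (n+1) - T (x n)‖ := by rw [norm_sub_rev]
    _ < ε / 2 + ε / 2 := by exact add_lt_add hdiff hsecond
    _ = ε := by ring
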